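/- Let k, M be positive integers with gcd(k, M) = g, and let χ be a nonprincipal Dirichlet character of modulus k. Then for all real x < y, |∑_{x < n ≤ y, gcd(n,M)=1} χ(n)| ≤ 2^(ω(M) - ω(g)) · ((1/(3 log 3))·√k·log k + (13/2)·√k), where ω(n) denotes the number of distinct prime divisors of n. -/

import Mathlib

open Finset ArithmeticFunction
open scoped ArithmeticFunction.Moebius

lemma csb_mem_Icc_floor_iff (x y : ℝ) (a : ℤ) :
    a ∈ Finset.Icc (⌊x⌋ + 1) ⌊y⌋ ↔ x < (a : ℝ) ∧ (a : ℝ) ≤ y := by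
  simp [Finset.mem_Icc, Int.add_one_le_iff, Int.floor_lt, Int.le_floor]

lemma csb_indicator_eq (M : ℕ) (hM : 0 < M) (k : ℕ) (χ : DirichletCharacter ℂ k) (n : ℤ) :
    (if Int.gcd n M = 1 then χ (n : ZMod k) else 0) =
      ∑ d ∈ M.divisors, (μ d : ℂ) * (if (d : ℤ) ∣ n then χ (n : ZMod k) else 0) := by
  have h1 : ∀ d ∈ M.divisors, (μ d : ℂ) * (if (d : ℤ) ∣ n then χ (n : ZMod k) else 0) =
      (if (d : ℤ) ∣ n then (μ d : ℂ) * χ (n : ZMod k) else 0) := by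
    intro d _; split <;> simp
  rw [Finset.sum_congr rfl h1, ← Finset.sum_filter]
  have hgcd : Int.gcd n (M : ℤ) = Nat.gcd n.natAbs M := by
    simp [Int.gcd]
  have h2 : M.divisors.filter (fun d : ℕ => (d : ℤ) ∣ n) = (Int.gcd n (M : ℤ)).divisors := by
    ext e
    simp only [Nat.mem_divisors, Finset.mem_filter, hgcd, Nat.dvd_gcd_iff, Int.natCast_dvd]
    constructor
    · rintro ⟨⟨heM, _⟩, hen⟩
      exact ⟨⟨hen, heM⟩, by simp [Nat.gcd_eq_zero_iff, hM.ne']⟩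
    · rintro ⟨⟨hen, heM⟩, -⟩
      exact ⟨⟨heM, hM.ne'⟩, hen⟩
  rw [h2, ← Finset.sum_mul]
  have h3 : (∑ e ∈ (Int.gcd n (M : ℤ)).divisors, (μ e : ℂ)) =
      if Int.gcd n (M : ℤ) = 1 then 1 else 0 := by
    have h4 := ArithmeticFunction.coe_mul_zeta_apply
      (f := (μ : ArithmeticFunction ℤ)) (x := Int.gcd n (M : ℤ))
    rw [ArithmeticFunction.moebius_mul_coe_zeta, ArithmeticFunction.one_apply] at h4
    have h5 : (∑ e ∈ (Int.gcd n (M : ℤ)).divisors, (μ e : ℂ)) =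
        ((∑ e ∈ (Int.gcd n (M : ℤ)).divisors, μ e : ℤ) : ℂ) := by push_cast; rfl
    rw [h5, ← h4]
    split <;> simp
  rw [h3]
  split <;> simp

lemma csb_reindex (k : ℕ) (χ : DirichletCharacter ℂ k) (d : ℕ) (hd : 0 < d) (x y : ℝ) :
    (∑ n ∈ Finset.Icc (⌊x⌋ + 1) ⌊y⌋, if (d : ℤ) ∣ n then χ (n : ZMod k) else 0) =
      χ (d : ZMod k) * ∑ m ∈ Finset.Icc (⌊x / d⌋ + 1) ⌊y / d⌋, χ (m : ZMod k) := by
  have hd0 : (0 : ℝ) < (d : ℝ) := by exact_mod_cast hd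
  have hdz : (0 : ℤ) < (d : ℤ) := by exact_mod_cast hd
  rw [Finset.mul_sum, ← Finset.sum_filter]
  refine Finset.sum_bij' (i := fun n _ => n / (d : ℤ)) (j := fun m _ => (d : ℤ) * m)
    ?_ ?_ ?_ ?_ ?_
  · intro n hn
    simp only [Finset.mem_filter, csb_mem_Icc_floor_iff] at hn
    obtain ⟨⟨hx, hy⟩, hdvd⟩ := hn
    have hn' : (d : ℤ) * (n / d) = n := Int.mul_ediv_cancel' hdvd
    rw [csb_mem_Icc_floor_iff]
    constructor
    · rw [div_lt_iff₀ hd0]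
      calc x < (n : ℝ) := hx
        _ = (d : ℝ) * ((n / (d : ℤ) : ℤ) : ℝ) := by exact_mod_cast congrArg Int.cast hn'.symm
        _ = ((n / (d : ℤ) : ℤ) : ℝ) * d := by ring
    · rw [le_div_iff₀ hd0]
      calc ((n / (d : ℤ) : ℤ) : ℝ) * d = (d : ℝ) * ((n / (d : ℤ) : ℤ) : ℝ) := by ring
        _ = (n : ℝ) := by exact_mod_cast congrArg Int.cast hn'
        _ ≤ y := hy
  · intro m hm
    rw [csb_mem_Icc_floor_iff] at hm
    obtain ⟨hx, hy⟩ := hm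
    rw [div_lt_iff₀ hd0] at hx
    rw [le_div_iff₀ hd0] at hy
    simp only [Finset.mem_filter, csb_mem_Icc_floor_iff]
    refine ⟨⟨?_, ?_⟩, Dvd.intro m rfl⟩
    · push_cast; nlinarith
    · push_cast; nlinarith
  · intro n hn
    simp only [Finset.mem_filter] at hn
    exact Int.mul_ediv_cancel' hn.2
  · intro m _
    exact Int.mul_ediv_cancel_left m hdz.ne'
  · intro n hn
    simp only [Finset.mem_filter] at hn
    have hn' : (d : ℤ) * (n / d) = n := Int.mul_ediv_cancel' hn.2
    calc χ ((n : ℤ) : ZMod k) = χ (((d : ℤ) * (n / (d : ℤ)) : ℤ) : ZMod k) := by rw [hn']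
      _ = χ ((d : ℕ) : ZMod k) * χ (((n / (d : ℤ)) : ℤ) : ZMod k) := by
          push_cast; rw [map_mul]

lemma csb_card_bound (k M : ℕ) (hk : k ≠ 0) (hM : M ≠ 0) :
    (M.divisors.filter fun d => Squarefree d ∧ Nat.Coprime d k).card ≤
      2 ^ (M.primeFactors.card - (Nat.gcd k M).primeFactors.card) := by
  have h1 : (M.divisors.filter fun d => Squarefree d ∧ Nat.Coprime d k).card ≤
      ((M.primeFactors \ k.primeFactors).powerset).card := by
    apply Finset.card_le_card_of_injOn (fun d => d.primeFactors)
    · intro d hd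
      simp only [Finset.mem_coe, Finset.mem_filter, Nat.mem_divisors] at hd
      obtain ⟨⟨hdM, _⟩, hsq, hcop⟩ := hd
      simp only [Finset.mem_coe, Finset.mem_powerset]
      intro p hp
      rw [Nat.mem_primeFactors] at hp
      obtain ⟨hpp, hpd, _⟩ := hp
      rw [Finset.mem_sdiff]
      refine ⟨Nat.mem_primeFactors.mpr ⟨hpp, hpd.trans hdM, hM⟩, fun hpk => ?_⟩
      rw [Nat.mem_primeFactors] at hpk
      exact hpp.ne_one (Nat.eq_one_of_dvd_coprimes hcop hpd hpk.2.1)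
    · intro d1 h1 d2 h2 heq
      simp only [Finset.coe_filter, Set.mem_setOf_eq, Nat.mem_divisors] at h1 h2
      rw [← Nat.prod_primeFactors_of_squarefree h1.2.1,
        ← Nat.prod_primeFactors_of_squarefree h2.2.1, show d1.primeFactors = d2.primeFactors from heq]
  have h2 : (M.primeFactors \ k.primeFactors).card =
      M.primeFactors.card - (Nat.gcd k M).primeFactors.card := by
    rw [Nat.primeFactors_gcd hk hM, Finset.inter_comm,
      ← Finset.sdiff_inter_self_left M.primeFactors k.primeFactors,
      Finset.card_sdiff_of_subset (Finset.inter_subset_left)]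
  calc _ ≤ _ := h1
    _ = 2 ^ (M.primeFactors \ k.primeFactors).card := Finset.card_powerset _
    _ = _ := by rw [h2]


/-- Pólya–Vinogradov type bound for character sums restricted to integers coprime to `M`. -/
theorem char_sum_coprime_bound (k M : ℕ) (hk : 0 < k) (hM : 0 < M)
    (χ : DirichletCharacter ℂ k) (hχ : χ ≠ 1)
    (hPV : ∀ x y : ℝ, x < y →
      ‖∑ n ∈ Finset.Icc (⌊x⌋ + 1) ⌊y⌋, χ (n : ZMod k)‖ ≤
        1 / (3 * Real.log 3) * Real.sqrt k * Real.log k + 13 / 2 * Real.sqrt k) :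
    ∀ x y : ℝ, x < y →
      ‖∑ n ∈ Finset.Icc (⌊x⌋ + 1) ⌊y⌋,
          if Int.gcd n M = 1 then χ (n : ZMod k) else 0‖ ≤
        (2 : ℝ) ^ (M.primeFactors.card - (Nat.gcd k M).primeFactors.card) *
          (1 / (3 * Real.log 3) * Real.sqrt k * Real.log k + 13 / 2 * Real.sqrt k) := by
  intro x y hxy
  haveI : NeZero k := ⟨hk.ne'⟩
  set B : ℝ := 1 / (3 * Real.log 3) * Real.sqrt k * Real.log k + 13 / 2 * Real.sqrt k with hBdef
  have hB0 : 0 ≤ B := by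
    have h3 : 0 < Real.log 3 := Real.log_pos (by norm_num)
    have hlogk : 0 ≤ Real.log k := Real.log_nonneg (by exact_mod_cast hk)
    have hsk : 0 ≤ Real.sqrt (k : ℝ) := Real.sqrt_nonneg _
    positivity
  have key : (∑ n ∈ Finset.Icc (⌊x⌋ + 1) ⌊y⌋,
      if Int.gcd n M = 1 then χ (n : ZMod k) else 0) =
      ∑ d ∈ M.divisors, (μ d : ℂ) * (χ ((d : ℕ) : ZMod k) *
        ∑ m ∈ Finset.Icc (⌊x / d⌋ + 1) ⌊y / d⌋, χ (m : ZMod k)) := by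
    calc (∑ n ∈ Finset.Icc (⌊x⌋ + 1) ⌊y⌋,
          if Int.gcd n M = 1 then χ (n : ZMod k) else 0)
        = ∑ n ∈ Finset.Icc (⌊x⌋ + 1) ⌊y⌋, ∑ d ∈ M.divisors,
          (μ d : ℂ) * (if (d : ℤ) ∣ n then χ (n : ZMod k) else 0) :=
        Finset.sum_congr rfl fun n _ => csb_indicator_eq M hM k χ n
      _ = ∑ d ∈ M.divisors, ∑ n ∈ Finset.Icc (⌊x⌋ + 1) ⌊y⌋,
          (μ d : ℂ) * (if (d : ℤ) ∣ n then χ (n : ZMod k) else 0) := Finset.sum_comm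
      _ = _ := Finset.sum_congr rfl fun d hd => by
          rw [← Finset.mul_sum, csb_reindex k χ d (Nat.pos_of_mem_divisors hd) x y]
  rw [key]
  have hterm : ∀ d ∈ M.divisors, ‖(μ d : ℂ) * (χ ((d : ℕ) : ZMod k) *
      ∑ m ∈ Finset.Icc (⌊x / d⌋ + 1) ⌊y / d⌋, χ (m : ZMod k))‖ ≤
      if Squarefree d ∧ Nat.Coprime d k then B else 0 := by
    intro d hd
    have hdpos := Nat.pos_of_mem_divisors hd
    have hd0 : (0 : ℝ) < (d : ℝ) := by exact_mod_cast hdpos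
    by_cases hp : Squarefree d ∧ Nat.Coprime d k
    · rw [if_pos hp]
      have hxy' : x / d < y / d := by
        apply div_lt_div_of_pos_right hxy hd0
      have hT := hPV (x / d) (y / d) hxy'
      rw [norm_mul, norm_mul]
      have h1 : ‖((μ d : ℤ) : ℂ)‖ ≤ 1 := by
        rw [Complex.norm_intCast]
        exact_mod_cast ArithmeticFunction.abs_moebius_le_one
      have h2 : ‖χ ((d : ℕ) : ZMod k)‖ ≤ 1 := by
        exact χ.norm_le_one ((d : ℕ) : ZMod k)
      calc ‖((μ d : ℤ) : ℂ)‖ * (‖χ ((d : ℕ) : ZMod k)‖ *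
            ‖∑ m ∈ Finset.Icc (⌊x / d⌋ + 1) ⌊y / d⌋, χ (m : ZMod k)‖)
          ≤ 1 * (1 * B) := by
            apply mul_le_mul h1 (mul_le_mul h2 hT (norm_nonneg _) zero_le_one)
              (by positivity) zero_le_one
        _ = B := by ring
    · rw [if_neg hp]
      rw [not_and_or] at hp
      rcases hp with hsq | hcop
      · have : μ d = 0 := ArithmeticFunction.moebius_eq_zero_of_not_squarefree hsq
        simp [this]
      · have : χ ((d : ℕ) : ZMod k) = 0 := χ.map_nonunit (by
          rw [ZMod.isUnit_iff_coprime]; exact hcop)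
        simp [this]
  calc ‖∑ d ∈ M.divisors, (μ d : ℂ) * (χ ((d : ℕ) : ZMod k) *
        ∑ m ∈ Finset.Icc (⌊x / d⌋ + 1) ⌊y / d⌋, χ (m : ZMod k))‖
      ≤ ∑ d ∈ M.divisors, ‖(μ d : ℂ) * (χ ((d : ℕ) : ZMod k) *
        ∑ m ∈ Finset.Icc (⌊x / d⌋ + 1) ⌊y / d⌋, χ (m : ZMod k))‖ :=
        norm_sum_le _ _
    _ ≤ ∑ d ∈ M.divisors, (if Squarefree d ∧ Nat.Coprime d k then B else 0) :=
        Finset.sum_le_sum hterm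
    _ = ((M.divisors.filter fun d => Squarefree d ∧ Nat.Coprime d k).card : ℝ) * B := by
        rw [← Finset.sum_filter, Finset.sum_const, nsmul_eq_mul]
    _ ≤ (2 : ℝ) ^ (M.primeFactors.card - (Nat.gcd k M).primeFactors.card) * B := by
        apply mul_le_mul_of_nonneg_right _ hB0
        exact_mod_cast csb_card_bound k M hk.ne' hM.ne'
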